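/- Let φ : [t^{n-1}, t^{n+1}] → ℝ be three times continuously differentiable, where t^{n+1} - t^n = t^n - t^{n-1} = Δt > 0. Then |φ'(t^{n+1}) - (3φ(t^{n+1}) - 4φ(t^n) + φ(t^{n-1}))/(2Δt)|² ≤ C·Δt³·∫_{t^{n-1}}^{t^{n+1}} |φ'''(t)|² dt, for some constant C independent of φ and Δt. -/

import Mathlib

open MeasureTheory intervalIntegral Set

/-- Cauchy–Schwarz for interval integrals of continuous functions. -/
lemma cs_interval {f g : ℝ → ℝ} (hf : Continuous f) (hg : Continuous g) {a b : ℝ}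
    (hab : a ≤ b) :
    (∫ s in a..b, f s * g s) ^ 2 ≤ (∫ s in a..b, f s ^ 2) * (∫ s in a..b, g s ^ 2) := by
  set μ : Measure ℝ := volume.restrict (Set.Ioc a b) with hμ
  haveI : IsFiniteMeasure μ := by
    constructor
    rw [hμ, Measure.restrict_apply_univ, Real.volume_Ioc]
    exact ENNReal.ofReal_lt_top
  have hmem : ∀ (h : ℝ → ℝ), Continuous h → MemLp h (ENNReal.ofReal 2) μ := by
    intro h hc
    obtain ⟨C, hC⟩ := (isCompact_Icc (a := a) (b := b)).exists_bound_of_continuousOn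
      hc.continuousOn
    have htop : MemLp h ⊤ μ := by
      apply memLp_top_of_bound hc.aestronglyMeasurable C
      have := ae_restrict_mem (μ := volume) (measurableSet_Ioc (a := a) (b := b))
      filter_upwards [this] with x hx
      exact hC x (Ioc_subset_Icc_self hx)
    exact htop.mono_exponent le_top
  have hpq : Real.HolderConjugate 2 2 := Real.HolderConjugate.two_two
  have key := MeasureTheory.integral_mul_norm_le_Lp_mul_Lq (μ := μ) hpq
    (hmem f hf) (hmem g hg)
  have habs : |∫ x, f x * g x ∂μ| ≤ ∫ x, ‖f x‖ * ‖g x‖ ∂μ := by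
    calc |∫ x, f x * g x ∂μ| ≤ ∫ x, ‖f x * g x‖ ∂μ := by
          exact (Real.norm_eq_abs _ ▸ norm_integral_le_integral_norm _)
      _ = ∫ x, ‖f x‖ * ‖g x‖ ∂μ := by simp [norm_mul]
  have hfx : ∀ x : ℝ, ‖f x‖ ^ (2:ℝ) = f x ^ 2 := fun x => by
    rw [show (2:ℝ) = ((2:ℕ):ℝ) by norm_num, Real.rpow_natCast, Real.norm_eq_abs, sq_abs]
  have hgx : ∀ x : ℝ, ‖g x‖ ^ (2:ℝ) = g x ^ 2 := fun x => by
    rw [show (2:ℝ) = ((2:ℕ):ℝ) by norm_num, Real.rpow_natCast, Real.norm_eq_abs, sq_abs]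
  have hA : (0:ℝ) ≤ ∫ x, f x ^ 2 ∂μ := integral_nonneg fun x => sq_nonneg _
  have hB : (0:ℝ) ≤ ∫ x, g x ^ 2 ∂μ := integral_nonneg fun x => sq_nonneg _
  have key2 : |∫ x, f x * g x ∂μ| ≤
      (∫ x, f x ^ 2 ∂μ) ^ ((1:ℝ)/2) * (∫ x, g x ^ 2 ∂μ) ^ ((1:ℝ)/2) := by
    refine habs.trans ?_
    simp only [hfx, hgx] at key
    exact key
  have hsq : (∫ x, f x * g x ∂μ) ^ 2 ≤ (∫ x, f x ^ 2 ∂μ) * (∫ x, g x ^ 2 ∂μ) := by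
    have h1 : (∫ x, f x * g x ∂μ) ^ 2 = |∫ x, f x * g x ∂μ| ^ 2 := (sq_abs _).symm
    rw [h1]
    calc |∫ x, f x * g x ∂μ| ^ 2
        ≤ ((∫ x, f x ^ 2 ∂μ) ^ ((1:ℝ)/2) * (∫ x, g x ^ 2 ∂μ) ^ ((1:ℝ)/2)) ^ 2 := by
          apply pow_le_pow_left₀ (abs_nonneg _) key2
      _ = (∫ x, f x ^ 2 ∂μ) * (∫ x, g x ^ 2 ∂μ) := by
          rw [mul_pow, ← Real.rpow_natCast ((∫ x, f x ^ 2 ∂μ) ^ ((1:ℝ)/2)) 2,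
            ← Real.rpow_natCast ((∫ x, g x ^ 2 ∂μ) ^ ((1:ℝ)/2)) 2,
            ← Real.rpow_mul hA, ← Real.rpow_mul hB]
          norm_num
  simpa [intervalIntegral.integral_of_le hab] using hsq

/-- Taylor expansion of order 2 with integral remainder. -/
lemma taylor3 {φ : ℝ → ℝ} (hφ : ContDiff ℝ 3 φ) (a x : ℝ) :
    φ x = φ a + deriv φ a * (x - a) + iteratedDeriv 2 φ a * (x - a) ^ 2 / 2
      + ∫ s in a..x, iteratedDeriv 3 φ s * (x - s) ^ 2 / 2 := by
  have h0 : Differentiable ℝ φ := hφ.differentiable (by norm_num)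
  have h1 : Differentiable ℝ (deriv φ) := by
    have := hφ.differentiable_iteratedDeriv 1 (by norm_num)
    simpa [iteratedDeriv_one] using this
  have h2 : Differentiable ℝ (iteratedDeriv 2 φ) :=
    hφ.differentiable_iteratedDeriv 2 (by norm_num)
  have h3 : Continuous (iteratedDeriv 3 φ) :=
    hφ.continuous_iteratedDeriv 3 le_rfl
  have hD2 : ∀ s, HasDerivAt (deriv φ) (iteratedDeriv 2 φ s) s := by
    intro s
    have := (h1 s).hasDerivAt
    have e : iteratedDeriv 2 φ s = deriv (deriv φ) s := by
      rw [iteratedDeriv_succ, iteratedDeriv_one]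
    rw [e]; exact this
  have hD3 : ∀ s, HasDerivAt (iteratedDeriv 2 φ) (iteratedDeriv 3 φ s) s := by
    intro s
    have := (h2 s).hasDerivAt
    have e : iteratedDeriv 3 φ s = deriv (iteratedDeriv 2 φ) s := by
      rw [iteratedDeriv_succ]
    rw [e]; exact this
  set F : ℝ → ℝ := fun s => φ s + deriv φ s * (x - s) + iteratedDeriv 2 φ s * (x - s) ^ 2 / 2
    with hF
  have hFderiv : ∀ s, HasDerivAt F (iteratedDeriv 3 φ s * (x - s) ^ 2 / 2) s := by
    intro s
    have hA : HasDerivAt φ (deriv φ s) s := (h0 s).hasDerivAt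
    have hlin : HasDerivAt (fun y : ℝ => x - y) (-1) s := by
      simpa using (hasDerivAt_id s).const_sub x
    have hB : HasDerivAt (fun y => deriv φ y * (x - y))
        (iteratedDeriv 2 φ s * (x - s) + deriv φ s * (-1)) s := (hD2 s).mul hlin
    have hsq : HasDerivAt (fun y : ℝ => (x - y) ^ 2) (2 * (x - s) ^ 1 * (-1)) s := hlin.pow 2
    have hC : HasDerivAt (fun y => iteratedDeriv 2 φ y * (x - y) ^ 2 / 2)
        ((iteratedDeriv 3 φ s * (x - s) ^ 2 + iteratedDeriv 2 φ s * (2 * (x - s) ^ 1 * (-1))) / 2)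
        s := ((hD3 s).mul hsq).div_const 2
    have := (hA.add hB).add hC
    exact this.congr_deriv (by ring)
  have hcont : Continuous (fun s => iteratedDeriv 3 φ s * (x - s) ^ 2 / 2) :=
    (h3.mul ((continuous_const.sub continuous_id).pow 2)).div_const 2
  have hFTC := intervalIntegral.integral_eq_sub_of_hasDerivAt
    (f := F) (f' := fun s => iteratedDeriv 3 φ s * (x - s) ^ 2 / 2)
    (a := a) (b := x) (fun s _ => hFderiv s) (hcont.intervalIntegrable a x)
  have hFx : F x = φ x := by simp [hF]
  have hFa : F a = φ a + deriv φ a * (x - a) + iteratedDeriv 2 φ a * (x - a) ^ 2 / 2 := rfl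
  rw [hFx, hFa] at hFTC
  linarith

/-- BDF2 consistency estimate: there is a constant `C`, independent of `φ` and `Δt`,
such that the BDF2 approximation of the derivative satisfies
`|φ'(tⁿ⁺¹) - (3φ(tⁿ⁺¹) - 4φ(tⁿ) + φ(tⁿ⁻¹))/(2Δt)|² ≤ C Δt³ ∫_{tⁿ⁻¹}^{tⁿ⁺¹} |φ'''|²`. -/
theorem bdf2_consistency :
    ∃ C > (0:ℝ), ∀ (φ : ℝ → ℝ), ContDiff ℝ 3 φ →
      ∀ (t Δt : ℝ), 0 < Δt →
      |deriv φ (t + Δt) - (3 * φ (t + Δt) - 4 * φ t + φ (t - Δt)) / (2 * Δt)| ^ 2 ≤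
        C * Δt ^ 3 * ∫ s in (t - Δt)..(t + Δt), |iteratedDeriv 3 φ s| ^ 2 := by
  refine ⟨2, by norm_num, ?_⟩
  intro φ hφ t Δt hΔt
  set a := t + Δt with ha
  set b := t - Δt with hb
  set M := iteratedDeriv 3 φ with hM
  have hMc : Continuous M := hφ.continuous_iteratedDeriv 3 le_rfl
  set d := deriv φ a with hd
  set D := iteratedDeriv 2 φ a with hD
  set R1 := ∫ s in a..t, M s * (t - s) ^ 2 / 2 with hR1
  set R2 := ∫ s in a..b, M s * (b - s) ^ 2 / 2 with hR2
  have eq1 : φ t = φ a + d * (-Δt) + D * (-Δt) ^ 2 / 2 + R1 := by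
    have h := taylor3 hφ a t
    rw [show t - a = -Δt by rw [ha]; ring] at h
    exact h
  have eq2 : φ b = φ a + d * (-(2*Δt)) + D * (-(2*Δt)) ^ 2 / 2 + R2 := by
    have h := taylor3 hφ a b
    rw [show b - a = -(2*Δt) by rw [ha, hb]; ring] at h
    exact h
  have hE : deriv φ a - (3 * φ a - 4 * φ t + φ b) / (2 * Δt) = (4 * R1 - R2) / (2 * Δt) := by
    rw [eq1, eq2, ← hd]
    field_simp
    ring
  -- Cauchy–Schwarz bounds
  have hta : t ≤ a := by rw [ha]; linarith
  have hba : b ≤ a := by rw [ha, hb]; linarith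
  have hbt : b ≤ t := by rw [hb]; linarith
  set I := ∫ s in b..a, M s ^ 2 with hI
  have hInn : 0 ≤ I := intervalIntegral.integral_nonneg hba (fun s _ => sq_nonneg _)
  have hI1 : (∫ s in t..a, M s ^ 2) ≤ I := by
    rw [hI]
    apply intervalIntegral.integral_mono_interval hbt hta le_rfl
    · exact Filter.Eventually.of_forall fun s => sq_nonneg _
    · exact ((hMc.pow 2).intervalIntegrable b a)
  have hI1nn : (0:ℝ) ≤ ∫ s in t..a, M s ^ 2 :=
    intervalIntegral.integral_nonneg hta (fun s _ => sq_nonneg _)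
  have hw1c : Continuous (fun s : ℝ => (t - s) ^ 2 / 2) :=
    ((continuous_const.sub continuous_id).pow 2).div_const 2
  have hw2c : Continuous (fun s : ℝ => (b - s) ^ 2 / 2) :=
    ((continuous_const.sub continuous_id).pow 2).div_const 2
  have hW1 : (∫ s in t..a, ((t - s) ^ 2 / 2) ^ 2) = Δt ^ 5 / 20 := by
    have e : ∀ s : ℝ, ((t - s) ^ 2 / 2) ^ 2 = (fun u : ℝ => u ^ 4 / 4) (s - t) := by
      intro s; simp only; ring
    rw [intervalIntegral.integral_congr (fun s _ => e s),
      intervalIntegral.integral_comp_sub_right (fun u : ℝ => u ^ 4 / 4) t]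
    rw [show t - t = (0:ℝ) by ring, show a - t = Δt by rw [ha]; ring]
    rw [intervalIntegral.integral_div, integral_pow]
    norm_num
    ring
  have hW2 : (∫ s in b..a, ((b - s) ^ 2 / 2) ^ 2) = 32 * Δt ^ 5 / 20 := by
    have e : ∀ s : ℝ, ((b - s) ^ 2 / 2) ^ 2 = (fun u : ℝ => u ^ 4 / 4) (s - b) := by
      intro s; simp only; ring
    rw [intervalIntegral.integral_congr (fun s _ => e s),
      intervalIntegral.integral_comp_sub_right (fun u : ℝ => u ^ 4 / 4) b]
    rw [show b - b = (0:ℝ) by ring, show a - b = 2*Δt by rw [ha, hb]; ring]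
    rw [intervalIntegral.integral_div, integral_pow]
    norm_num
    ring
  have hR1sq : R1 ^ 2 ≤ Δt ^ 5 / 20 * I := by
    have hflip : R1 = -∫ s in t..a, M s * (t - s) ^ 2 / 2 := by
      rw [hR1, intervalIntegral.integral_symm]
    have e : ∀ s : ℝ, M s * (t - s) ^ 2 / 2 = M s * ((t - s) ^ 2 / 2) := fun s => by ring
    have hcs := cs_interval hMc hw1c hta
    calc R1 ^ 2 = (∫ s in t..a, M s * ((t - s) ^ 2 / 2)) ^ 2 := by
          rw [hflip, neg_sq, intervalIntegral.integral_congr (fun s _ => e s)]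
      _ ≤ (∫ s in t..a, M s ^ 2) * (∫ s in t..a, ((t - s) ^ 2 / 2) ^ 2) := hcs
      _ = (∫ s in t..a, ((t - s) ^ 2 / 2) ^ 2) * (∫ s in t..a, M s ^ 2) := by ring
      _ ≤ Δt ^ 5 / 20 * I := by
          rw [hW1]
          apply mul_le_mul_of_nonneg_left hI1 (by positivity)
  have hR2sq : R2 ^ 2 ≤ 32 * Δt ^ 5 / 20 * I := by
    have hflip : R2 = -∫ s in b..a, M s * (b - s) ^ 2 / 2 := by
      rw [hR2, intervalIntegral.integral_symm]
    have e : ∀ s : ℝ, M s * (b - s) ^ 2 / 2 = M s * ((b - s) ^ 2 / 2) := fun s => by ring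
    have hcs := cs_interval hMc hw2c hba
    calc R2 ^ 2 = (∫ s in b..a, M s * ((b - s) ^ 2 / 2)) ^ 2 := by
          rw [hflip, neg_sq, intervalIntegral.integral_congr (fun s _ => e s)]
      _ ≤ (∫ s in b..a, M s ^ 2) * (∫ s in b..a, ((b - s) ^ 2 / 2) ^ 2) := hcs
      _ = 32 * Δt ^ 5 / 20 * I := by rw [hW2, ← hI]; ring
  have habs2 : |deriv φ a - (3 * φ a - 4 * φ t + φ b) / (2 * Δt)| ^ 2
      = ((4 * R1 - R2) / (2 * Δt)) ^ 2 := by rw [sq_abs, hE]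
  have hfin : ((4 * R1 - R2) / (2 * Δt)) ^ 2 ≤ 2 * Δt ^ 3 * I := by
    rw [div_pow]
    rw [div_le_iff₀ (by positivity : (0:ℝ) < (2*Δt)^2)]
    have hnum : (4 * R1 - R2) ^ 2 ≤ 32 * R1 ^ 2 + 2 * R2 ^ 2 := by
      nlinarith [sq_nonneg (4 * R1 + R2)]
    nlinarith [sq_nonneg Δt, mul_pos hΔt hΔt, pow_pos hΔt 5, mul_nonneg (pow_pos hΔt 5).le hInn]
  have hRHS : (∫ s in b..a, |M s| ^ 2) = I := by
    rw [hI]; simp [sq_abs]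
  rw [habs2]
  calc ((4 * R1 - R2) / (2 * Δt)) ^ 2 ≤ 2 * Δt ^ 3 * I := hfin
    _ = 2 * Δt ^ 3 * ∫ s in (t - Δt)..(t + Δt), |iteratedDeriv 3 φ s| ^ 2 := by
        rw [← ha, ← hb, ← hM, hRHS]
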